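/- Let B = ℂ[X]/(X³) be the quotient of the polynomial ring ℂ[X] by the ideal generated by X³, and let T : B → B be the ℂ-linear map determined by T([λ₀ + λ₁X + λ₂X²]) = [λ₁X] for scalars λ₀, λ₁, λ₂ ∈ ℂ. Then: (i) T is a local derivation, i.e. for every b ∈ B there exists a ℂ-linear derivation D_b : B → B (satisfying D_b(uv) = D_b(u)v + uD_b(v) for all u, v ∈ B) with T(b) = D_b(b); and (ii) T is not a derivation. -/

import Mathlib

open Polynomial

/-- The 3-dimensional algebra `ℂ[X]/(X³)`. -/
noncomputable abbrev PolyQuot : Type :=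
  Polynomial ℂ ⧸ Ideal.span {(X : Polynomial ℂ) ^ 3}

/-- The ideal `(X³)`. -/
noncomputable abbrev Ipq : Ideal (Polynomial ℂ) := Ideal.span {(X : Polynomial ℂ) ^ 3}

/-- The pre-derivation `p ↦ [p' ⬝ g]`. -/
noncomputable def preD (g : Polynomial ℂ) : Polynomial ℂ →ₗ[ℂ] PolyQuot :=
  (Ideal.Quotient.mkₐ ℂ Ipq).toLinearMap ∘ₗ (LinearMap.mulRight ℂ g) ∘ₗ
    (Polynomial.derivative : Polynomial ℂ →ₗ[ℂ] Polynomial ℂ)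

lemma preD_ker (g : Polynomial ℂ) (hg : (X : Polynomial ℂ) ∣ g) :
    Ipq.restrictScalars ℂ ≤ LinearMap.ker (preD g) := by
  intro p hp
  obtain ⟨q, rfl⟩ := (Ideal.mem_span_singleton).mp hp
  obtain ⟨h, rfl⟩ := hg
  show Ideal.Quotient.mk Ipq (derivative (X ^ 3 * q) * (X * h)) = 0
  rw [Ideal.Quotient.eq_zero_iff_mem, Ideal.mem_span_singleton]
  exact ⟨3 * q * h + derivative q * X * h, by simp [derivative_mul, map_ofNat]; ring⟩

/-- The derivation `[p] ↦ [p' ⬝ g]` on the quotient, for `X ∣ g`. -/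
noncomputable def Dlift (g : Polynomial ℂ) (hg : (X : Polynomial ℂ) ∣ g) :
    PolyQuot →ₗ[ℂ] PolyQuot :=
  (Submodule.liftQ (Ipq.restrictScalars ℂ) (preD g) (preD_ker g hg)) ∘ₗ
    (Submodule.Quotient.restrictScalarsEquiv ℂ Ipq).symm.toLinearMap

lemma Dlift_mk (g : Polynomial ℂ) (hg : (X : Polynomial ℂ) ∣ g) (p : Polynomial ℂ) :
    Dlift g hg (Ideal.Quotient.mk Ipq p) = Ideal.Quotient.mk Ipq (derivative p * g) := rfl

lemma Dlift_leibniz (g : Polynomial ℂ) (hg : (X : Polynomial ℂ) ∣ g) (u v : PolyQuot) :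
    Dlift g hg (u * v) = Dlift g hg u * v + u * Dlift g hg v := by
  obtain ⟨p, rfl⟩ := Ideal.Quotient.mk_surjective (I := Ipq) u
  obtain ⟨q, rfl⟩ := Ideal.Quotient.mk_surjective (I := Ipq) v
  rw [← map_mul (Ideal.Quotient.mk Ipq), Dlift_mk, Dlift_mk, Dlift_mk,
    ← map_mul (Ideal.Quotient.mk Ipq), ← map_mul (Ideal.Quotient.mk Ipq),
    ← map_add (Ideal.Quotient.mk Ipq)]
  congr 1
  rw [derivative_mul]; ring

/-- Every element of the quotient is represented by a polynomial of degree `< 3`. -/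
lemma PolyQuot.repr' (x : PolyQuot) :
    ∃ a b c : ℂ, x = Ideal.Quotient.mk Ipq (C a + C b * X + C c * X ^ 2) := by
  obtain ⟨p, rfl⟩ := Ideal.Quotient.mk_surjective (I := Ipq) x
  set q := p %ₘ (X ^ 3 : Polynomial ℂ) with hq
  have hmonic : (X ^ 3 : Polynomial ℂ).Monic := monic_X_pow 3
  have h1 : Ideal.Quotient.mk Ipq p = Ideal.Quotient.mk Ipq q := by
    rw [Ideal.Quotient.mk_eq_mk_iff_sub_mem, hq, modByMonic_eq_sub_mul_div _ _]
    simp [Ideal.mem_span_singleton]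
  have hdeg : q.degree < 3 := by
    simpa using degree_modByMonic_lt p hmonic
  refine ⟨q.coeff 0, q.coeff 1, q.coeff 2, ?_⟩
  rw [h1]
  congr 1
  ext n
  rcases n with _ | _ | _ | n
  · simp
  · simp
  · simp
  · rw [coeff_eq_zero_of_degree_lt
      (hdeg.trans_le (by exact_mod_cast by omega : (3 : WithBot ℕ) ≤ ((n+3 : ℕ) : WithBot ℕ)))]
    simp [coeff_X, coeff_X_pow]

/-- **Kaplansky's example.**  The linear map `T` on `ℂ[X]/(X³)` determined by
`T [λ₀ + λ₁X + λ₂X²] = [λ₁ X]` is a local derivation which is not a derivation. -/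
theorem local_derivation_not_derivation_on_poly_quot
    (T : PolyQuot →ₗ[ℂ] PolyQuot)
    (hT : ∀ a b c : ℂ,
      T (Ideal.Quotient.mk (Ideal.span {(X : Polynomial ℂ) ^ 3}) (C a + C b * X + C c * X ^ 2)) =
        Ideal.Quotient.mk (Ideal.span {(X : Polynomial ℂ) ^ 3}) (C b * X)) :
    (∀ x : PolyQuot, ∃ D : PolyQuot →ₗ[ℂ] PolyQuot,
        (∀ u v : PolyQuot, D (u * v) = D u * v + u * D v) ∧ T x = D x) ∧
    ¬ (∀ u v : PolyQuot, T (u * v) = T u * v + u * T v) := by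
  constructor
  · -- `T` is a local derivation.
    intro x
    obtain ⟨a, b, c, rfl⟩ := PolyQuot.repr' x
    by_cases hb : b = 0
    · refine ⟨0, by simp, ?_⟩
      rw [hT, hb]
      simp
    · set d : ℂ := -(2 * c / b) with hd
      set g : Polynomial ℂ := X + C d * X ^ 2 with hgdef
      have hg : (X : Polynomial ℂ) ∣ g := ⟨1 + C d * X, by rw [hgdef]; ring⟩
      refine ⟨Dlift g hg, Dlift_leibniz g hg, ?_⟩
      rw [hT, Dlift_mk]
      rw [Ideal.Quotient.mk_eq_mk_iff_sub_mem, Ideal.mem_span_singleton]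
      have h0 : C b * C d + 2 * C c = (0 : Polynomial ℂ) := by
        rw [← C_mul]
        have hbd : b * d = -(2 * c) := by rw [hd]; field_simp
        rw [hbd]
        simp [map_ofNat]
      refine ⟨-(2 * C c * C d), ?_⟩
      have hder : derivative (C a + C b * X + C c * X ^ 2) = C b + 2 * C c * X := by
        simp [derivative_mul, map_ofNat]; ring
      rw [hder, hgdef]
      linear_combination (-(X:Polynomial ℂ)^2) * h0
  · -- `T` is not a derivation.
    intro h
    have hX : (Ideal.Quotient.mk Ipq X : PolyQuot) =
        Ideal.Quotient.mk Ipq (C 0 + C 1 * X + C 0 * X ^ 2) := by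
      ring_nf; simp
    have hX2 : (Ideal.Quotient.mk Ipq (X ^ 2) : PolyQuot) =
        Ideal.Quotient.mk Ipq (C 0 + C 0 * X + C 1 * X ^ 2) := by
      ring_nf; simp
    have h1 : T (Ideal.Quotient.mk Ipq X) = Ideal.Quotient.mk Ipq X := by
      rw [hX, hT 0 1 0]; simp
    have h2 : T (Ideal.Quotient.mk Ipq X * Ideal.Quotient.mk Ipq X) = 0 := by
      rw [← map_mul, ← pow_two, hX2, hT 0 0 1]; simp
    have := h (Ideal.Quotient.mk Ipq X) (Ideal.Quotient.mk Ipq X)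
    rw [h1, h2, ← map_mul, ← pow_two] at this
    have h3 : (2 : ℂ) • (Ideal.Quotient.mk Ipq (X ^ 2) : PolyQuot) = 0 := by
      rw [two_smul]; exact this.symm
    have h4 : (Ideal.Quotient.mk Ipq (X ^ 2) : PolyQuot) = 0 := by
      calc (Ideal.Quotient.mk Ipq (X ^ 2) : PolyQuot)
          = (2 : ℂ)⁻¹ • ((2 : ℂ) • (Ideal.Quotient.mk Ipq (X ^ 2) : PolyQuot)) := by
            rw [smul_smul]; norm_num
        _ = 0 := by rw [h3, smul_zero]
    rw [Ideal.Quotient.eq_zero_iff_mem, Ideal.mem_span_singleton] at h4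
    have := Polynomial.natDegree_le_of_dvd h4 (pow_ne_zero 2 X_ne_zero)
    simp at this
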